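/- arXiv:1707.07401 — 3 statements merged into one kernel-verified Lean document; each statement's English description precedes it below -/
import Mathlib

section
/- Let N₁, ..., N_L be independent and identically distributed Poisson random variables each with mean λ > 0, and let n ≥ 1 be an integer. Then P((∃ i ∈ {1,...,L}, N_i = 1) and N₁ + ⋯ + N_L = n) = Σ_{c=1}^{min(L,n)} (−1)^{c+1} · C(L,c) · (λ·e^{−λ})^c · ((L − c)·λ)^{n−c} · e^{−(L−c)·λ} / (n − c)!, where C(L,c) is the binomial coefficient and with the convention 0⁰ = 1 when c = L = n. -/
open MeasureTheory ProbabilityTheory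


open Finset in
/-- Exponential-weight multinomial theorem:
`∑_{f ∈ piAntidiag s k} ∏_{i∈s} x^{f i}/(f i)! = (|s| x)^k / k!`. -/
lemma expMultinomial {ι : Type*} [DecidableEq ι] (s : Finset ι) (x : ℝ) (k : ℕ) :
    ∑ f ∈ Finset.piAntidiag s k, ∏ i ∈ s, x ^ f i / (f i).factorial
      = ((s.card : ℝ) * x) ^ k / (k.factorial : ℝ) := by
  have hk : (k.factorial : ℝ) ≠ 0 := by exact_mod_cast k.factorial_ne_zero
  rw [eq_div_iff hk]
  have h := Finset.sum_pow_eq_sum_piAntidiag s (fun _ => x) k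
  simp only [Finset.sum_const, nsmul_eq_mul] at h
  rw [h, Finset.sum_mul]
  refine Finset.sum_congr rfl fun f hf => ?_
  rw [Finset.mem_piAntidiag] at hf
  have hfac : ((∏ i ∈ s, (f i).factorial : ℕ) : ℝ) ≠ 0 := by
    exact_mod_cast Finset.prod_ne_zero_iff.2 fun i _ => (f i).factorial_ne_zero
  have hspec : ((∏ i ∈ s, (f i).factorial : ℕ) : ℝ) * (Nat.multinomial s f : ℝ)
      = (k.factorial : ℝ) := by
    rw [← Nat.cast_mul, Nat.multinomial_spec, hf.1]
  have hmul : (Nat.multinomial s f : ℝ) = (k.factorial : ℝ) / ∏ i ∈ s, ((f i).factorial : ℝ) := by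
    push_cast at hspec ⊢
    field_simp at hspec ⊢
    linarith [hspec]
  rw [Finset.prod_div_distrib, hmul]
  push_cast
  ring


lemma indicatorIE {L : ℕ} (f : Fin L → ℕ) :
    (if ∃ i, f i = 1 then (1:ℝ) else 0)
      = ∑ T ∈ (Finset.univ : Finset (Fin L)).powerset,
          (if T.Nonempty ∧ ∀ i ∈ T, f i = 1 then (-1:ℝ)^(T.card+1) else 0) := by
  classical
  set S : Finset (Fin L) := Finset.univ.filter (fun i => f i = 1) with hS
  have hmemS : ∀ i, i ∈ S ↔ f i = 1 := fun i => by simp [hS]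
  have hsub : ∀ T : Finset (Fin L), (∀ i ∈ T, f i = 1) ↔ T ⊆ S := by
    intro T
    constructor
    · intro h i hi; exact (hmemS i).2 (h i hi)
    · intro h i hi; exact (hmemS i).1 (h hi)
  rw [← Finset.sum_subset (Finset.powerset_mono.2 (Finset.subset_univ S))
      (fun T _ hT => if_neg (fun hc => hT (Finset.mem_powerset.2 ((hsub T).1 hc.2))))]
  have hterm : ∀ T ∈ S.powerset,
      (if T.Nonempty ∧ ∀ i ∈ T, f i = 1 then (-1:ℝ)^(T.card+1) else 0)
        = -(-1:ℝ)^T.card + (if T = ∅ then 1 else 0) := by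
    intro T hT
    rcases Finset.eq_empty_or_nonempty T with rfl | hne
    · simp
    · rw [if_pos ⟨hne, (hsub T).2 (Finset.mem_powerset.1 hT)⟩, if_neg hne.ne_empty, pow_succ]
      ring
  rw [Finset.sum_congr rfl hterm, Finset.sum_add_distrib]
  have hcast : (∑ T ∈ S.powerset, -(-1:ℝ)^T.card) = -(if S = ∅ then 1 else 0) := by
    have h := congrArg (fun z : ℤ => (z : ℝ)) (Finset.sum_powerset_neg_one_pow_card (x := S))
    push_cast at h
    rw [Finset.sum_neg_distrib, h]
  have hone : (∑ T ∈ S.powerset, (if T = ∅ then (1:ℝ) else 0)) = 1 := by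
    rw [Finset.sum_ite_eq' S.powerset ∅ (fun _ => (1:ℝ))]
    exact if_pos (Finset.empty_mem_powerset S)
  rw [hcast, hone]
  by_cases h : ∃ i, f i = 1
  · obtain ⟨i, hi⟩ := h
    have : S ≠ ∅ := Finset.ne_empty_of_mem ((hmemS i).2 hi)
    simp [this, hi]
    exact ⟨i, hi⟩
  · have : S = ∅ := by
      rw [Finset.eq_empty_iff_forall_notMem]
      intro i hi
      exact h ⟨i, (hmemS i).1 hi⟩
    simp [this, h]

lemma innerSum {L n : ℕ} (x : ℝ) (T : Finset (Fin L)) (hTn : T.card ≤ n) :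
    ∑ f ∈ (Finset.piAntidiag (Finset.univ : Finset (Fin L)) n).filter
        (fun f => ∀ i ∈ T, f i = 1), ∏ i, x ^ f i / ((f i).factorial : ℝ)
      = x ^ T.card * (((L - T.card : ℕ) : ℝ) * x) ^ (n - T.card)
          / ((n - T.card).factorial : ℝ) := by
  classical
  have hcard : (Tᶜ).card = L - T.card := by
    rw [Finset.card_compl, Fintype.card_fin]
  rw [mul_div_assoc, ← hcard, ← expMultinomial (Tᶜ) x (n - T.card), Finset.mul_sum]
  refine Finset.sum_nbij' (fun f j => if j ∈ T then 0 else f j)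
    (fun g j => if j ∈ T then 1 else g j) ?_ ?_ ?_ ?_ ?_
  · intro f hf
    rw [Finset.mem_filter, Finset.mem_piAntidiag] at hf
    obtain ⟨⟨hsum, -⟩, hone⟩ := hf
    rw [Finset.mem_piAntidiag]
    constructor
    · have hsplit : ∑ i ∈ T, f i + ∑ i ∈ Tᶜ, f i = n := by
        rw [Finset.sum_add_sum_compl, hsum]
      have hT1 : ∑ i ∈ T, f i = T.card := by
        rw [Finset.sum_congr rfl hone, Finset.sum_const, smul_eq_mul, mul_one]
      have : ∑ i ∈ Tᶜ, (if i ∈ T then 0 else f i) = ∑ i ∈ Tᶜ, f i :=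
        Finset.sum_congr rfl fun i hi => if_neg (Finset.mem_compl.1 hi)
      rw [this]
      omega
    · intro i hi
      by_cases h : i ∈ T
      · simp [h] at hi
      · exact Finset.mem_compl.2 h
  · intro g hg
    rw [Finset.mem_piAntidiag] at hg
    obtain ⟨hsum, hsupp⟩ := hg
    rw [Finset.mem_filter, Finset.mem_piAntidiag]
    refine ⟨⟨?_, fun i _ => Finset.mem_univ i⟩, fun i hi => if_pos hi⟩
    rw [← Finset.sum_add_sum_compl T]
    have h1 : ∑ i ∈ T, (if i ∈ T then 1 else g i) = T.card := by
      rw [Finset.sum_congr rfl fun i hi => if_pos hi, Finset.sum_const, smul_eq_mul, mul_one]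
    have h2 : ∑ i ∈ Tᶜ, (if i ∈ T then 1 else g i) = n - T.card := by
      rw [Finset.sum_congr rfl fun i hi => if_neg (Finset.mem_compl.1 hi), hsum]
    rw [h1, h2]
    omega
  · intro f hf
    rw [Finset.mem_filter] at hf
    funext j
    by_cases h : j ∈ T
    · simp [h, (hf.2 j h).symm]
    · simp [h]
  · intro g hg
    rw [Finset.mem_piAntidiag] at hg
    funext j
    by_cases h : j ∈ T
    · have : g j = 0 := by
        by_contra hne
        exact (Finset.mem_compl.1 (hg.2 j hne)) h
      simp [h, this]
    · simp [h]
  · intro f hf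
    rw [Finset.mem_filter] at hf
    rw [← Finset.prod_mul_prod_compl T]
    have h1 : ∏ i ∈ T, x ^ f i / ((f i).factorial : ℝ) = x ^ T.card := by
      rw [Finset.prod_congr rfl (fun i hi => by rw [hf.2 i hi]), Finset.prod_const]
      norm_num
    have h2 : ∏ i ∈ Tᶜ, x ^ f i / ((f i).factorial : ℝ)
        = ∏ i ∈ Tᶜ, x ^ (if i ∈ T then 0 else f i) / (((if i ∈ T then 0 else f i)).factorial : ℝ) :=
      Finset.prod_congr rfl fun i hi => by rw [if_neg (Finset.mem_compl.1 hi)]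
    rw [h1, h2]

lemma keyIdentity (L n : ℕ) (x : ℝ) :
    ∑ f ∈ (Finset.piAntidiag (Finset.univ : Finset (Fin L)) n).filter (fun f => ∃ i, f i = 1),
        ∏ i, x ^ f i / ((f i).factorial : ℝ)
      = ∑ c ∈ Finset.Icc 1 (min L n),
          (-1:ℝ)^(c+1) * (Nat.choose L c : ℝ) * x^c * (((L:ℝ) - c) * x)^(n-c)
            / ((n-c).factorial : ℝ) := by
  classical
  rw [Finset.sum_filter]
  have step1 : ∀ f ∈ Finset.piAntidiag (Finset.univ : Finset (Fin L)) n,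
      (if ∃ i, f i = 1 then ∏ i, x ^ f i / ((f i).factorial : ℝ) else 0)
        = ∑ T ∈ (Finset.univ : Finset (Fin L)).powerset,
            (if T.Nonempty ∧ ∀ i ∈ T, f i = 1 then (-1:ℝ)^(T.card+1) else 0)
              * ∏ i, x ^ f i / ((f i).factorial : ℝ) := by
    intro f _
    rw [← Finset.sum_mul, ← indicatorIE f, ite_mul, one_mul, zero_mul]
  rw [Finset.sum_congr rfl step1, Finset.sum_comm]
  have step2 : ∀ T ∈ (Finset.univ : Finset (Fin L)).powerset,
      (∑ f ∈ Finset.piAntidiag (Finset.univ : Finset (Fin L)) n,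
        (if T.Nonempty ∧ ∀ i ∈ T, f i = 1 then (-1:ℝ)^(T.card+1) else 0)
          * ∏ i, x ^ f i / ((f i).factorial : ℝ))
        = if 1 ≤ T.card ∧ T.card ≤ n then
            (-1:ℝ)^(T.card+1) * (x ^ T.card * (((L - T.card : ℕ) : ℝ) * x) ^ (n - T.card)
              / ((n - T.card).factorial : ℝ)) else 0 := by
    intro T _
    by_cases hT : T.Nonempty
    · by_cases hTn : T.card ≤ n
      · rw [if_pos ⟨Finset.one_le_card.2 hT, hTn⟩, ← innerSum x T hTn,
          Finset.sum_filter, Finset.mul_sum]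
        refine Finset.sum_congr rfl fun f _ => ?_
        by_cases hP : ∀ i ∈ T, f i = 1
        · rw [if_pos ⟨hT, hP⟩, if_pos hP]
        · rw [if_neg (fun h => hP h.2), if_neg hP, zero_mul, mul_zero]
      · rw [if_neg (fun h => hTn h.2)]
        refine Finset.sum_eq_zero fun f hf => ?_
        rw [Finset.mem_piAntidiag] at hf
        have hno : ¬ ∀ i ∈ T, f i = 1 := by
          intro hP
          apply hTn
          have h1 : ∑ i ∈ T, f i = T.card := by
            rw [Finset.sum_congr rfl hP, Finset.sum_const, smul_eq_mul, mul_one]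
          have h2 : ∑ i ∈ T, f i ≤ ∑ i ∈ Finset.univ, f i :=
            Finset.sum_le_sum_of_subset (Finset.subset_univ T)
          rw [hf.1] at h2
          omega
        exact mul_eq_zero_of_left (if_neg fun h => hno h.2) _
    · rw [if_neg (fun h => hT (Finset.one_le_card.mp h.1))]
      refine Finset.sum_eq_zero fun f _ => ?_
      exact mul_eq_zero_of_left (if_neg fun h => hT h.1) _
  rw [Finset.sum_congr rfl step2, Finset.sum_powerset]
  have hLcard : (Finset.univ : Finset (Fin L)).card = L := by
    rw [Finset.card_univ, Fintype.card_fin]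
  rw [hLcard]
  have step3 : ∀ c ∈ Finset.range (L+1),
      (∑ T ∈ Finset.powersetCard c (Finset.univ : Finset (Fin L)),
        (if 1 ≤ T.card ∧ T.card ≤ n then
          (-1:ℝ)^(T.card+1) * (x ^ T.card * (((L - T.card : ℕ) : ℝ) * x) ^ (n - T.card)
            / ((n - T.card).factorial : ℝ)) else 0))
        = (Nat.choose L c : ℝ) * (if 1 ≤ c ∧ c ≤ n then
            (-1:ℝ)^(c+1) * (x ^ c * (((L - c : ℕ) : ℝ) * x) ^ (n - c)
              / ((n - c).factorial : ℝ)) else 0) := by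
    intro c _
    rw [Finset.sum_congr rfl (fun T hT => by rw [(Finset.mem_powersetCard.1 hT).2]),
      Finset.sum_const, Finset.card_powersetCard, hLcard, nsmul_eq_mul]
  rw [Finset.sum_congr rfl step3]
  have hsub : Finset.Icc 1 (min L n) ⊆ Finset.range (L+1) := by
    intro c hc
    rw [Finset.mem_Icc] at hc
    rw [Finset.mem_range]
    omega
  rw [← Finset.sum_subset hsub (fun c hc hc' => ?_)]
  · refine Finset.sum_congr rfl fun c hc => ?_
    rw [Finset.mem_Icc] at hc
    have hcL : c ≤ L := le_trans hc.2 (min_le_left L n)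
    have hcn : c ≤ n := le_trans hc.2 (min_le_right L n)
    rw [if_pos ⟨hc.1, hcn⟩, Nat.cast_sub hcL]
    ring
  · rw [Finset.mem_range] at hc
    rw [Finset.mem_Icc] at hc'
    have : ¬ (1 ≤ c ∧ c ≤ n) := by omega
    rw [if_neg this, mul_zero]

/-- For iid Poisson(λ) variables `N₁, …, N_L` and an integer `n ≥ 1`:
`P((∃ i, Nᵢ = 1) ∧ ∑ Nᵢ = n)
  = Σ_{c=1}^{min(L,n)} (−1)^{c+1} C(L,c) (λ e^{−λ})^c ((L−c) λ)^{n−c} e^{−(L−c) λ}/(n−c)!`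
(with `0⁰ = 1` when `c = L = n`). -/
theorem stmt7 {Ω : Type*} [MeasurableSpace Ω] (μ : Measure Ω) [IsProbabilityMeasure μ]
    (L : ℕ) (lam : ℝ) (hlam : 0 < lam)
    (N : Fin L → Ω → ℕ) (hmeas : ∀ i, Measurable (N i))
    (hindep : iIndepFun N μ)
    (hpois : ∀ (i : Fin L) (k : ℕ),
      μ {ω | N i ω = k} = ENNReal.ofReal (Real.exp (-lam) * lam ^ k / (Nat.factorial k)))
    (n : ℕ) (hn : 1 ≤ n) :
    μ {ω | (∃ i : Fin L, N i ω = 1) ∧ (∑ i, N i ω) = n}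
      = ENNReal.ofReal (∑ c ∈ Finset.Icc 1 (min L n),
          (-1 : ℝ) ^ (c + 1) * (Nat.choose L c) * (lam * Real.exp (-lam)) ^ c *
            (((L : ℝ) - c) * lam) ^ (n - c) * Real.exp (-(((L : ℝ) - c) * lam)) /
              (Nat.factorial (n - c))) := by
  classical
  set F : Finset (Fin L → ℕ) :=
    (Finset.piAntidiag (Finset.univ : Finset (Fin L)) n).filter (fun f => ∃ i, f i = 1) with hF
  have hEvent : {ω | (∃ i : Fin L, N i ω = 1) ∧ (∑ i, N i ω) = n}
      = ⋃ f ∈ F, ⋂ i, N i ⁻¹' {f i} := by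
    ext ω
    simp only [Set.mem_setOf_eq, Set.mem_iUnion, Set.mem_iInter, Set.mem_preimage,
      Set.mem_singleton_iff, hF, Finset.mem_filter, Finset.mem_piAntidiag, Finset.mem_univ]
    constructor
    · rintro ⟨hex, hsum⟩
      exact ⟨fun i => N i ω, ⟨⟨hsum, fun i _ => trivial⟩, hex⟩, fun i => rfl⟩
    · rintro ⟨f, ⟨⟨hsum, -⟩, hex⟩, hfe⟩
      constructor
      · obtain ⟨i, hi⟩ := hex
        exact ⟨i, by rw [hfe i, hi]⟩
      · calc ∑ i, N i ω = ∑ i, f i := Finset.sum_congr rfl fun i _ => hfe i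
          _ = n := hsum
  have hdisj : Set.PairwiseDisjoint (↑F) (fun f : Fin L → ℕ => ⋂ i, N i ⁻¹' {f i}) := by
    intro f _ g _ hfg
    obtain ⟨i, hi⟩ := Function.ne_iff.1 hfg
    refine Set.disjoint_left.2 fun ω hωf hωg => ?_
    simp only [Set.mem_iInter, Set.mem_preimage, Set.mem_singleton_iff] at hωf hωg
    exact hi ((hωf i).symm.trans (hωg i))
  have hmeas' : ∀ f ∈ F, MeasurableSet (⋂ i, N i ⁻¹' {f i}) :=
    fun f _ => MeasurableSet.iInter fun i => hmeas i (measurableSet_singleton _)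
  rw [hEvent, measure_biUnion_finset hdisj hmeas']
  have hpiece : ∀ f ∈ F, μ (⋂ i, N i ⁻¹' {f i})
      = ∏ i, ENNReal.ofReal (Real.exp (-lam) * lam ^ f i / ((f i).factorial : ℝ)) := by
    intro f _
    rw [hindep.meas_iInter (fun i => ⟨{f i}, measurableSet_singleton _, rfl⟩)]
    exact Finset.prod_congr rfl fun i _ => hpois i (f i)
  rw [Finset.sum_congr rfl hpiece]
  have hnn : ∀ (k : ℕ), 0 ≤ Real.exp (-lam) * lam ^ k / (k.factorial : ℝ) := by
    intro k; positivity
  have h1 : ∀ f ∈ F, (∏ i, ENNReal.ofReal (Real.exp (-lam) * lam ^ f i / ((f i).factorial : ℝ)))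
      = ENNReal.ofReal (∏ i, Real.exp (-lam) * lam ^ f i / ((f i).factorial : ℝ)) :=
    fun f _ => (ENNReal.ofReal_prod_of_nonneg fun i _ => hnn (f i)).symm
  rw [Finset.sum_congr rfl h1, ← ENNReal.ofReal_sum_of_nonneg
    (fun f _ => Finset.prod_nonneg fun i _ => hnn (f i))]
  congr 1
  have hprod : ∀ f : Fin L → ℕ,
      (∏ i, Real.exp (-lam) * lam ^ f i / ((f i).factorial : ℝ))
        = Real.exp (-lam) ^ L * ∏ i, lam ^ f i / ((f i).factorial : ℝ) := by
    intro f
    simp_rw [mul_div_assoc]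
    rw [Finset.prod_mul_distrib, Finset.prod_const, Finset.card_univ, Fintype.card_fin]
  have hterm : ∀ c ∈ Finset.Icc 1 (min L n),
      (-1 : ℝ) ^ (c + 1) * (Nat.choose L c) * (lam * Real.exp (-lam)) ^ c *
          (((L : ℝ) - c) * lam) ^ (n - c) * Real.exp (-(((L : ℝ) - c) * lam)) /
            (Nat.factorial (n - c))
        = Real.exp (-lam) ^ L *
            ((-1:ℝ)^(c+1) * (Nat.choose L c : ℝ) * lam^c * (((L:ℝ) - c) * lam)^(n-c)
              / ((n-c).factorial : ℝ)) := by
    intro c hc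
    rw [Finset.mem_Icc] at hc
    have hcL : (c : ℝ) ≤ (L : ℝ) := by
      exact_mod_cast le_trans hc.2 (min_le_left L n)
    have he : Real.exp (-lam) ^ c * Real.exp (-(((L:ℝ) - c) * lam)) = Real.exp (-lam) ^ L := by
      rw [← Real.exp_nat_mul, ← Real.exp_nat_mul, ← Real.exp_add]
      congr 1
      ring
    rw [mul_pow, ← he]
    ring
  rw [Finset.sum_congr rfl (fun f _ => hprod f), ← Finset.mul_sum, keyIdentity L n lam,
    Finset.sum_congr rfl hterm, ← Finset.mul_sum]
end

section
/- Let N₁, ..., N_L be independent and identically distributed Poisson random variables each with mean λ > 0, and let n ≥ 0 be an integer with n ≠ 1 or L ≥ 2. Then the conditional probability that N₁ + ⋯ + N_L = n given that N_i ≠ 1 for all i ∈ {1,...,L} equals [ (L·λ)^n · e^{−L·λ}/n! + Σ_{c=1}^{min(L,n)} (−1)^c · C(L,c) · (λ·e^{−λ})^c · ((L − c)·λ)^{n−c} · e^{−(L−c)·λ} / (n − c)! ] / (1 − λ·e^{−λ})^L, where C(L,c) is the binomial coefficient and with the convention 0⁰ = 1 when c = L = n. -/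
open MeasureTheory ProbabilityTheory

open Finset in
lemma aux_multinomial {ι : Type*} [DecidableEq ι] (s : Finset ι) (m : ℕ) (lam : ℝ) :
    ∑ k ∈ Finset.piAntidiag s m, ∏ i ∈ s, Real.exp (-lam) * lam ^ (k i) / (k i).factorial
      = ((s.card : ℝ) * lam) ^ m * Real.exp (-((s.card : ℝ) * lam)) / m.factorial := by
  have hpow := Finset.sum_pow_eq_sum_piAntidiag s (fun _ => lam) m
  simp only [Finset.sum_const, nsmul_eq_mul] at hpow
  have hterm : ∀ k ∈ Finset.piAntidiag s m,
      ∏ i ∈ s, Real.exp (-lam) * lam ^ (k i) / (k i).factorial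
        = Real.exp (-((s.card : ℝ) * lam)) / m.factorial *
            ((Nat.multinomial s k : ℝ) * ∏ i ∈ s, lam ^ (k i)) := by
    intro k hk
    rw [Finset.mem_piAntidiag] at hk
    have hsum : ∑ i ∈ s, k i = m := hk.1
    have hfact : ((∏ i ∈ s, (k i).factorial : ℕ) : ℝ) * (Nat.multinomial s k : ℝ)
        = (m.factorial : ℝ) := by
      rw [← Nat.cast_mul, Nat.multinomial_spec, hsum]
    have hfne : ((∏ i ∈ s, (k i).factorial : ℕ) : ℝ) ≠ 0 := by
      positivity
    have hmul : (Nat.multinomial s k : ℝ)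
        = (m.factorial : ℝ) / ((∏ i ∈ s, (k i).factorial : ℕ) : ℝ) := by
      rw [eq_div_iff hfne, mul_comm]; exact hfact
    rw [Finset.prod_div_distrib, Finset.prod_mul_distrib, Finset.prod_const, hmul]
    rw [← Real.exp_nat_mul]
    have hmne : (m.factorial : ℝ) ≠ 0 := by positivity
    push_cast
    field_simp
  rw [Finset.sum_congr rfl hterm, ← Finset.mul_sum, ← hpow]
  ring

open Finset in
lemma aux_restrict {ι : Type*} [Fintype ι] [DecidableEq ι] (t : Finset ι) (n : ℕ) (p : ℕ → ℝ)
    [inst : DecidablePred fun k : ι → ℕ => ∀ i ∈ t, k i = 1] :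
    ∑ k ∈ (Finset.piAntidiag (univ : Finset ι) n).filter (fun k => ∀ i ∈ t, k i = 1),
        ∏ i ∈ univ \ t, p (k i)
      = if t.card ≤ n then
          ∑ k ∈ Finset.piAntidiag (univ \ t) (n - t.card), ∏ i ∈ univ \ t, p (k i)
        else 0 := by
  have hsum_t : ∀ k : ι → ℕ, (∀ i ∈ t, k i = 1) → ∑ i ∈ t, k i = t.card := by
    intro k hk
    rw [Finset.sum_congr rfl hk, Finset.sum_const, smul_eq_mul, mul_one]
  by_cases hc : t.card ≤ n
  · rw [if_pos hc]
    refine Finset.sum_nbij' (fun k i => if i ∈ t then 0 else k i)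
      (fun k i => if i ∈ t then 1 else k i) ?_ ?_ ?_ ?_ ?_
    · -- forward membership
      intro k hk
      simp only [Finset.mem_filter, Finset.mem_piAntidiag] at hk
      obtain ⟨⟨hks, -⟩, hk1⟩ := hk
      rw [Finset.mem_piAntidiag]
      constructor
      · have heq : ∑ i ∈ univ \ t, (if i ∈ t then 0 else k i) = ∑ i ∈ univ \ t, k i := by
          refine Finset.sum_congr rfl fun i hi => ?_
          rw [if_neg (Finset.mem_sdiff.mp hi).2]
        rw [heq]
        have hsplit : ∑ i ∈ univ \ t, k i + ∑ i ∈ t, k i = ∑ i ∈ univ, k i :=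
          Finset.sum_sdiff (Finset.subset_univ t)
        have htc := hsum_t k hk1
        have hu : univ.sum k = ∑ i ∈ univ, k i := rfl
        omega
      · intro i hi
        by_cases hit : i ∈ t
        · simp [hit] at hi
        · simp [hit, Finset.mem_sdiff]
    · -- reverse membership
      intro k hk
      rw [Finset.mem_piAntidiag] at hk
      obtain ⟨hks, hksupp⟩ := hk
      simp only [Finset.mem_filter, Finset.mem_piAntidiag]
      refine ⟨⟨?_, fun i _ => Finset.mem_univ i⟩, fun i hi => if_pos hi⟩
      have h1 : ∑ i ∈ t, (if i ∈ t then 1 else k i) = t.card :=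
        hsum_t _ (fun i hi => if_pos hi)
      have h2 : ∑ i ∈ univ \ t, (if i ∈ t then 1 else k i) = n - t.card := by
        rw [← hks]
        refine Finset.sum_congr rfl fun i hi => if_neg (Finset.mem_sdiff.mp hi).2
      have hsplit : ∑ i ∈ univ \ t, (if i ∈ t then 1 else k i)
          + ∑ i ∈ t, (if i ∈ t then 1 else k i)
          = ∑ i ∈ univ, (if i ∈ t then 1 else k i) :=
        Finset.sum_sdiff (Finset.subset_univ t)
      have hu : univ.sum (fun i => if i ∈ t then 1 else k i)
          = ∑ i ∈ univ, (if i ∈ t then 1 else k i) := rfl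
      omega
    · -- left inverse
      intro k hk
      simp only [Finset.mem_filter] at hk
      funext i
      by_cases hit : i ∈ t
      · simp [hit, hk.2 i hit]
      · simp [hit]
    · -- right inverse
      intro k hk
      rw [Finset.mem_piAntidiag] at hk
      funext i
      by_cases hit : i ∈ t
      · have hz : k i = 0 := by
          by_contra h
          exact (Finset.mem_sdiff.mp (hk.2 i h)).2 hit
        simp [hit, hz]
      · simp [hit]
    · -- summand equality
      intro k hk
      refine Finset.prod_congr rfl fun i hi => ?_
      dsimp only
      rw [if_neg (Finset.mem_sdiff.mp hi).2]
  · rw [if_neg hc, Finset.filter_false_of_mem, Finset.sum_empty]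
    intro k hk h1
    rw [Finset.mem_piAntidiag] at hk
    have h2 := hsum_t k h1
    have hsplit : ∑ i ∈ univ \ t, k i + ∑ i ∈ t, k i = ∑ i ∈ univ, k i :=
      Finset.sum_sdiff (Finset.subset_univ t)
    have hu : univ.sum k = ∑ i ∈ univ, k i := rfl
    omega

open Finset in
lemma key_identity (L n : ℕ) (lam : ℝ)
    [inst : DecidablePred fun k : Fin L → ℕ => ∀ i, k i ≠ 1] :
    ∑ k ∈ (Finset.piAntidiag (univ : Finset (Fin L)) n).filter (fun k => ∀ i, k i ≠ 1),
        ∏ i, Real.exp (-lam) * lam ^ (k i) / (k i).factorial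
      = ((L : ℝ) * lam) ^ n * Real.exp (-((L : ℝ) * lam)) / (Nat.factorial n)
        + ∑ c ∈ Finset.Icc 1 (min L n),
            (-1 : ℝ) ^ c * (Nat.choose L c) * (lam * Real.exp (-lam)) ^ c *
              (((L : ℝ) - c) * lam) ^ (n - c) *
                Real.exp (-(((L : ℝ) - c) * lam)) / (Nat.factorial (n - c)) := by
  set p : ℕ → ℝ := fun m => Real.exp (-lam) * lam ^ m / m.factorial with hp
  set q : ℕ → ℝ := fun m => if m = 1 then -(lam * Real.exp (-lam)) else 0 with hq
  have hq1p1 : q 1 + p 1 = 0 := by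
    simp [hp, hq, Nat.factorial_one]
    ring
  -- Step 1: replace filtered sum by full sum of products of (q + p)
  have step1 : ∑ k ∈ (Finset.piAntidiag (univ : Finset (Fin L)) n).filter
        (fun k => ∀ i, k i ≠ 1), ∏ i, p (k i)
      = ∑ k ∈ Finset.piAntidiag (univ : Finset (Fin L)) n, ∏ i, (q (k i) + p (k i)) := by
    rw [← Finset.sum_filter_add_sum_filter_not (Finset.piAntidiag (univ : Finset (Fin L)) n)
      (fun k => ∀ i, k i ≠ 1) (fun k => ∏ i, (q (k i) + p (k i)))]
    have h2 : ∑ k ∈ (Finset.piAntidiag (univ : Finset (Fin L)) n).filter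
        (fun k => ¬ ∀ i, k i ≠ 1), ∏ i, (q (k i) + p (k i)) = 0 := by
      refine Finset.sum_eq_zero fun k hk => ?_
      simp only [Finset.mem_filter, not_forall, not_not] at hk
      obtain ⟨i, hi⟩ := hk.2
      exact Finset.prod_eq_zero (Finset.mem_univ i) (by rw [hi]; exact hq1p1)
    rw [h2, add_zero]
    refine Finset.sum_congr rfl fun k hk => ?_
    simp only [Finset.mem_filter] at hk
    refine Finset.prod_congr rfl fun i _ => ?_
    rw [hq]
    simp [hk.2 i]
  -- Step 2: expand the product and swap sums
  have step2 : ∑ k ∈ Finset.piAntidiag (univ : Finset (Fin L)) n, ∏ i, (q (k i) + p (k i))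
      = ∑ t ∈ (univ : Finset (Fin L)).powerset,
          ∑ k ∈ Finset.piAntidiag (univ : Finset (Fin L)) n,
            (∏ i ∈ t, q (k i)) * ∏ i ∈ univ \ t, p (k i) := by
    rw [Finset.sum_comm]
    exact Finset.sum_congr rfl fun k _ =>
      Finset.prod_add (fun i => q (k i)) (fun i => p (k i)) univ
  -- Step 3: evaluate the inner sum for each t
  have step3 : ∀ t : Finset (Fin L),
      ∑ k ∈ Finset.piAntidiag (univ : Finset (Fin L)) n,
          (∏ i ∈ t, q (k i)) * ∏ i ∈ univ \ t, p (k i)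
        = (-(lam * Real.exp (-lam))) ^ t.card *
            (if t.card ≤ n then
              (((L : ℕ) - t.card : ℕ) * lam : ℝ) ^ (n - t.card) *
                Real.exp (-((((L : ℕ) - t.card : ℕ) : ℝ) * lam)) / (n - t.card).factorial
             else 0) := by
    intro t
    have hfilter : ∑ k ∈ Finset.piAntidiag (univ : Finset (Fin L)) n,
          (∏ i ∈ t, q (k i)) * ∏ i ∈ univ \ t, p (k i)
        = ∑ k ∈ (Finset.piAntidiag (univ : Finset (Fin L)) n).filter
            (fun k => ∀ i ∈ t, k i = 1),
            (∏ i ∈ t, q (k i)) * ∏ i ∈ univ \ t, p (k i) := by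
      refine (Finset.sum_filter_of_ne fun k _ hne => ?_).symm
      intro i hi
      by_contra h1
      refine hne ?_
      have : q (k i) = 0 := by rw [hq]; simp [h1]
      rw [Finset.prod_eq_zero hi this, zero_mul]
    rw [hfilter]
    have hconst : ∀ k ∈ (Finset.piAntidiag (univ : Finset (Fin L)) n).filter
          (fun k => ∀ i ∈ t, k i = 1),
        (∏ i ∈ t, q (k i)) * ∏ i ∈ univ \ t, p (k i)
          = (-(lam * Real.exp (-lam))) ^ t.card * ∏ i ∈ univ \ t, p (k i) := by
      intro k hk
      simp only [Finset.mem_filter] at hk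
      congr 1
      rw [Finset.prod_congr rfl fun i hi => (by rw [hq]; simp [hk.2 i hi] :
            q (k i) = -(lam * Real.exp (-lam)))]
      rw [Finset.prod_const]
    rw [Finset.sum_congr rfl hconst, ← Finset.mul_sum]
    rw [aux_restrict t n p]
    congr 1
    by_cases hc : t.card ≤ n
    · rw [if_pos hc, if_pos hc, aux_multinomial]
      rw [Finset.card_sdiff_of_subset (Finset.subset_univ t), Finset.card_univ, Fintype.card_fin]
    · rw [if_neg hc, if_neg hc]
  -- Step 4: sum over the powerset grouped by cardinality
  rw [step1, step2, Finset.sum_congr rfl fun t _ => step3 t]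
  rw [Finset.sum_powerset_apply_card (fun c => (-(lam * Real.exp (-lam))) ^ c *
      (if c ≤ n then ((((L : ℕ) - c : ℕ) : ℝ) * lam) ^ (n - c) *
        Real.exp (-((((L : ℕ) - c : ℕ) : ℝ) * lam)) / (n - c).factorial else 0))]
  rw [Finset.card_univ, Fintype.card_fin]
  -- Step 5: split off c = 0 and match remaining terms
  have hins : Finset.range (L + 1) = insert 0 (Finset.Icc 1 L) := by
    ext x; simp only [Finset.mem_range, Finset.mem_insert, Finset.mem_Icc]; omega
  rw [hins, Finset.sum_insert (by simp)]
  congr 1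
  · simp [Nat.sub_zero]
  · rw [← Finset.sum_subset (Finset.Icc_subset_Icc_right (min_le_left L n))
      (fun c hc hcn => ?_)]
    · refine Finset.sum_congr rfl fun c hc => ?_
      rw [Finset.mem_Icc] at hc
      have hcL : c ≤ L := le_trans hc.2 (min_le_left L n)
      have hcn : c ≤ n := le_trans hc.2 (min_le_right L n)
      rw [if_pos hcn, nsmul_eq_mul, neg_pow]
      have hcast : (((L : ℕ) - c : ℕ) : ℝ) = (L : ℝ) - c := by
        push_cast [Nat.cast_sub hcL]; ring
      rw [hcast]
      ring
    · rw [Finset.mem_Icc] at hc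
      rw [Finset.mem_Icc] at hcn
      have hcn' : ¬ c ≤ n := by omega
      rw [if_neg hcn', mul_zero, smul_zero]

/-- Lemma 2 of the paper (generic form): for iid Poisson(λ) variables `N₁, …, N_L`
and an integer `n ≥ 0` with `n ≠ 1` or `L ≥ 2`, the conditional probability that
`∑ Nᵢ = n` given that no `Nᵢ` equals 1 is
`[(Lλ)^n e^{−Lλ}/n! + Σ_{c=1}^{min(L,n)} (−1)^c C(L,c) (λe^{−λ})^c ((L−c)λ)^{n−c}
   e^{−(L−c)λ}/(n−c)!] / (1 − λe^{−λ})^L`. -/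
theorem stmt8 {Ω : Type*} [MeasurableSpace Ω] (μ : Measure Ω) [IsProbabilityMeasure μ]
    (L : ℕ) (lam : ℝ) (hlam : 0 < lam)
    (N : Fin L → Ω → ℕ) (hmeas : ∀ i, Measurable (N i))
    (hindep : iIndepFun N μ)
    (hpois : ∀ (i : Fin L) (k : ℕ),
      μ {ω | N i ω = k} = ENNReal.ofReal (Real.exp (-lam) * lam ^ k / (Nat.factorial k)))
    (n : ℕ) (hn : n ≠ 1 ∨ 2 ≤ L) :
    (μ[|{ω | ∀ i : Fin L, N i ω ≠ 1}]) {ω | (∑ i, N i ω) = n}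
      = ENNReal.ofReal
          ((((L : ℝ) * lam) ^ n * Real.exp (-((L : ℝ) * lam)) / (Nat.factorial n)
            + ∑ c ∈ Finset.Icc 1 (min L n),
                (-1 : ℝ) ^ c * (Nat.choose L c) * (lam * Real.exp (-lam)) ^ c *
                  (((L : ℝ) - c) * lam) ^ (n - c) *
                    Real.exp (-(((L : ℝ) - c) * lam)) / (Nat.factorial (n - c)))
            / (1 - lam * Real.exp (-lam)) ^ L) := by
  have hx : lam * Real.exp (-lam) < 1 := by
    have h1 : lam < Real.exp lam := by linarith [Real.add_one_le_exp lam]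
    calc lam * Real.exp (-lam) < Real.exp lam * Real.exp (-lam) :=
          mul_lt_mul_of_pos_right h1 (Real.exp_pos _)
      _ = 1 := by rw [← Real.exp_add]; simp
  have hxpos : 0 < lam * Real.exp (-lam) := mul_pos hlam (Real.exp_pos _)
  have hDpos : (0 : ℝ) < (1 - lam * Real.exp (-lam)) ^ L := pow_pos (by linarith) L
  set A : Set Ω := {ω | ∀ i : Fin L, N i ω ≠ 1} with hAdef
  set B : Set Ω := {ω | (∑ i, N i ω) = n} with hBdef
  have hcomap : ∀ (i : Fin L) (s : Set ℕ),
      MeasurableSet[MeasurableSpace.comap (N i) inferInstance] ((N i) ⁻¹' s) :=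
    fun i s => ⟨s, trivial, rfl⟩
  -- the denominator
  have hA_eq : A = ⋂ i, (N i) ⁻¹' ({1}ᶜ) := by
    ext ω; simp [hAdef, Set.mem_iInter]
  have hA_meas : MeasurableSet A := by
    rw [hA_eq]
    exact MeasurableSet.iInter fun i => (hmeas i) (measurableSet_singleton 1).compl
  have hsingle : ∀ (i : Fin L) (k : ℕ),
      μ ((N i) ⁻¹' {k}) = ENNReal.ofReal (Real.exp (-lam) * lam ^ k / (Nat.factorial k)) := by
    intro i k
    have : (N i) ⁻¹' {k} = {ω | N i ω = k} := by ext ω; simp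
    rw [this]; exact hpois i k
  have hA_val : μ A = ENNReal.ofReal ((1 - lam * Real.exp (-lam)) ^ L) := by
    rw [hA_eq, hindep.meas_iInter (fun i => hcomap i ({1}ᶜ))]
    have hi : ∀ i : Fin L, μ ((N i) ⁻¹' ({1}ᶜ))
        = ENNReal.ofReal (1 - lam * Real.exp (-lam)) := by
      intro i
      rw [Set.preimage_compl, prob_compl_eq_one_sub ((hmeas i) (measurableSet_singleton 1)),
        hsingle i 1]
      rw [ENNReal.ofReal_sub _ (by positivity), ENNReal.ofReal_one]
      congr 1
      simp [Nat.factorial_one]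
      ring
    rw [Finset.prod_congr rfl (fun i _ => hi i), Finset.prod_const, Finset.card_univ,
      Fintype.card_fin, ← ENNReal.ofReal_pow (by linarith)]
  -- the numerator
  set K := (Finset.piAntidiag (Finset.univ : Finset (Fin L)) n).filter (fun k => ∀ i, k i ≠ 1) with hK
  have hAB : A ∩ B = ⋃ k ∈ K, ⋂ i, (N i) ⁻¹' {k i} := by
    ext ω
    simp only [Set.mem_inter_iff, Set.mem_iUnion, Set.mem_iInter, Set.mem_preimage,
      Set.mem_singleton_iff, hAdef, hBdef, Set.mem_setOf_eq, hK, Finset.mem_filter,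
      Finset.mem_piAntidiag]
    constructor
    · rintro ⟨h1, h2⟩
      exact ⟨fun i => N i ω, ⟨⟨h2, fun i _ => Finset.mem_univ i⟩, h1⟩, fun i => rfl⟩
    · rintro ⟨k, ⟨⟨hks, -⟩, hk1⟩, hkeq⟩
      constructor
      · intro i; rw [hkeq i]; exact hk1 i
      · rw [Finset.sum_congr rfl (fun i _ => hkeq i)]; exact hks
  have hE_meas : ∀ k : Fin L → ℕ, MeasurableSet (⋂ i, (N i) ⁻¹' {k i}) :=
    fun k => MeasurableSet.iInter fun i => (hmeas i) (measurableSet_singleton (k i))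
  have hAB_val : μ (A ∩ B)
      = ENNReal.ofReal (∑ k ∈ K, ∏ i, Real.exp (-lam) * lam ^ (k i) / ((k i).factorial)) := by
    rw [hAB, measure_biUnion_finset ?_ (fun k _ => hE_meas k)]
    · rw [ENNReal.ofReal_sum_of_nonneg (fun k _ => by positivity)]
      refine Finset.sum_congr rfl fun k _ => ?_
      rw [hindep.meas_iInter (fun i => hcomap i {k i})]
      rw [ENNReal.ofReal_prod_of_nonneg (fun i _ => by positivity)]
      exact Finset.prod_congr rfl fun i _ => hsingle i (k i)
    · intro k hk k' hk' hne
      refine Set.disjoint_left.mpr fun ω hω hω' => hne ?_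
      simp only [Set.mem_iInter, Set.mem_preimage, Set.mem_singleton_iff] at hω hω'
      funext i
      rw [← hω i, ← hω' i]
  -- assemble
  rw [cond_apply hA_meas, hA_val, hAB_val, hK, key_identity L n lam,
    ENNReal.ofReal_div_of_pos hDpos, ENNReal.div_eq_inv_mul]
end

section
/- Let I be a nonnegative real random variable on a probability space, and let A ≥ 0 and B > 0 be reals. Then E[ln(1 + A/(B + I))] = ∫₀^∞ (e^{−s·B}/s) · E[e^{−s·I}] · (1 − e^{−s·A}) ds, where the integral is over s ∈ (0, ∞). -/
open MeasureTheory Real Set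

lemma expF_integrable {x a : ℝ} (hx : 0 < x) (ha : 0 ≤ a) :
    Integrable (fun z : ℝ × ℝ => Real.exp (-(z.1 * z.2)))
      ((volume.restrict (Ioi (0:ℝ))).prod (volume.restrict (Ioc x (x+a)))) := by
  haveI : IsFiniteMeasure (volume.restrict (Ioc x (x+a))) :=
    ⟨by rw [Measure.restrict_apply_univ]; exact measure_Ioc_lt_top⟩
  have hcont : Continuous (fun z : ℝ × ℝ => Real.exp (-(z.1 * z.2))) := by
    exact Real.continuous_exp.comp ((continuous_fst.mul continuous_snd).neg)
  have hbound : Integrable (fun z : ℝ × ℝ => Real.exp (-x * z.1) * 1)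
      ((volume.restrict (Ioi (0:ℝ))).prod (volume.restrict (Ioc x (x+a)))) :=
    Integrable.mul_prod (exp_neg_integrableOn_Ioi 0 hx) (integrable_const 1)
  refine hbound.mono' hcont.aestronglyMeasurable ?_
  rw [Measure.prod_restrict]
  filter_upwards [ae_restrict_mem (measurableSet_Ioi.prod measurableSet_Ioc)] with z hz
  obtain ⟨hz1, hz2⟩ := hz
  rw [Real.norm_eq_abs, abs_of_pos (Real.exp_pos _), mul_one]
  exact Real.exp_le_exp.2 (by nlinarith [le_of_lt hz1.out, hz2.1.le])

lemma inner_eval {x a : ℝ} (hx : 0 < x) (ha : 0 ≤ a) {s : ℝ} (hs : 0 < s) :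
    ∫ t in Ioc x (x+a), Real.exp (-(s*t)) =
      (Real.exp (-(s*x)) - Real.exp (-(s*(x+a))))/s := by
  rw [← intervalIntegral.integral_of_le (by linarith : x ≤ x + a)]
  have hderiv : ∀ t ∈ Set.uIcc x (x+a),
      HasDerivAt (fun t => -Real.exp (-(s*t))/s) (Real.exp (-(s*t))) t := by
    intro t _
    have h := (((hasDerivAt_id t).const_mul s).neg.exp.neg.div_const s)
    convert h using 1
    · rfl
    · rfl
    · rfl
    · simp only [Pi.neg_apply, id]
      field_simp
  rw [intervalIntegral.integral_eq_sub_of_hasDerivAt hderiv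
    ((Real.continuous_exp.comp (continuous_const.mul continuous_id).neg).intervalIntegrable _ _)]
  field_simp
  ring

lemma exp_int {t : ℝ} (ht : 0 < t) :
    ∫ s in Ioi (0:ℝ), Real.exp (-(s*t)) = 1/t := by
  have hderiv : ∀ s ∈ Ici (0:ℝ),
      HasDerivAt (fun s => -Real.exp (-(s*t))/t) (Real.exp (-(s*t))) s := by
    intro s _
    have h := (((hasDerivAt_id s).mul_const t).neg.exp.neg.div_const t)
    convert h using 1
    · rfl
    · rfl
    · rfl
    · simp only [Pi.neg_apply, id]
      field_simp
  have hint : IntegrableOn (fun s => Real.exp (-(s*t))) (Ioi (0:ℝ)) := by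
    have := exp_neg_integrableOn_Ioi 0 ht
    simpa [mul_comm] using this
  have htend : Filter.Tendsto (fun s => -Real.exp (-(s*t))/t) Filter.atTop (nhds 0) := by
    have : Filter.Tendsto (fun s : ℝ => Real.exp (-(s*t))) Filter.atTop (nhds 0) := by
      apply Real.tendsto_exp_atBot.comp
      exact Filter.tendsto_neg_atBot_iff.2 (Filter.tendsto_id.atTop_mul_const ht)
    simpa using (this.neg.div_const t)
  have := integral_Ioi_of_hasDerivAt_of_tendsto' hderiv hint htend
  simp at this
  rw [this]; ring

lemma frullani {x a : ℝ} (hx : 0 < x) (ha : 0 ≤ a) :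
    ∫ s in Ioi (0:ℝ), (Real.exp (-(s*x)) - Real.exp (-(s*(x+a))))/s
      = Real.log ((x+a)/x) := by
  have hF := expF_integrable hx ha
  have swap := integral_integral_swap (f := fun s t => Real.exp (-(s*t))) hF
  have L : ∫ s in Ioi (0:ℝ), (Real.exp (-(s*x)) - Real.exp (-(s*(x+a))))/s
      = ∫ s in Ioi (0:ℝ), ∫ t in Ioc x (x+a), Real.exp (-(s*t)) := by
    refine setIntegral_congr_fun measurableSet_Ioi (fun s hs => ?_)
    exact (inner_eval hx ha hs).symm
  have R : ∫ t in Ioc x (x+a), ∫ s in Ioi (0:ℝ), Real.exp (-(s*t))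
      = Real.log ((x+a)/x) := by
    have : ∫ t in Ioc x (x+a), ∫ s in Ioi (0:ℝ), Real.exp (-(s*t))
        = ∫ t in Ioc x (x+a), 1/t := by
      refine setIntegral_congr_fun measurableSet_Ioc (fun t ht => ?_)
      exact exp_int (lt_of_lt_of_le hx ht.1.le)
    rw [this, ← intervalIntegral.integral_of_le (by linarith : x ≤ x + a)]
    exact integral_one_div (by
      rw [Set.uIcc_of_le (by linarith : x ≤ x + a)]
      intro h
      exact absurd h.1 (by linarith))
  rw [L, swap, R]

lemma h_integrable {x a : ℝ} (hx : 0 < x) (ha : 0 ≤ a) :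
    IntegrableOn (fun s => (Real.exp (-(s*x)) - Real.exp (-(s*(x+a))))/s)
      (Ioi (0:ℝ)) := by
  have := (expF_integrable hx ha).integral_prod_left
  refine this.congr ?_
  filter_upwards [ae_restrict_mem measurableSet_Ioi] with s hs
  exact inner_eval hx ha hs

/-- For a nonnegative real random variable `I` and reals `A ≥ 0`, `B > 0`:
`E[ln(1 + A/(B + I))] = ∫₀^∞ (e^{−sB}/s) E[e^{−sI}] (1 − e^{−sA}) ds`,
expressing the expected achievable rate through the Laplace transform of `I`. -/
theorem stmt13 {Ω : Type*} [MeasurableSpace Ω] (μ : Measure Ω) [IsProbabilityMeasure μ]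
    (I : Ω → ℝ) (hI : Measurable I) (hInn : ∀ ω, 0 ≤ I ω)
    (A B : ℝ) (hA : 0 ≤ A) (hB : 0 < B) :
    ∫ ω, Real.log (1 + A / (B + I ω)) ∂μ
      = ∫ s in Set.Ioi (0 : ℝ),
          (Real.exp (-(s * B)) / s) * (∫ ω, Real.exp (-(s * I ω)) ∂μ) *
            (1 - Real.exp (-(s * A))) := by
  set h : ℝ → ℝ := fun s => (Real.exp (-(s*B)) - Real.exp (-(s*(B+A))))/s with hh
  set G : Ω → ℝ → ℝ := fun ω s => h s * Real.exp (-(s * I ω)) with hG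
  have hx : ∀ ω, 0 < B + I ω := fun ω => by have := hInn ω; linarith
  -- pointwise identity
  have step1 : ∀ ω, Real.log (1 + A / (B + I ω)) = ∫ s in Ioi (0:ℝ), G ω s := by
    intro ω
    have h1 : 1 + A / (B + I ω) = ((B + I ω) + A) / (B + I ω) := by
      rw [add_div, div_self (hx ω).ne']
    rw [h1, ← frullani (hx ω) hA]
    refine setIntegral_congr_fun measurableSet_Ioi (fun s hs => ?_)
    have hs' : (0:ℝ) < s := hs
    show _ = h s * Real.exp (-(s * I ω))
    simp only [hh]
    rw [show -(s*(B + I ω)) = -(s*B) + -(s * I ω) by ring,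
      show -(s*((B + I ω)+A)) = -(s*(B+A)) + -(s * I ω) by ring,
      Real.exp_add, Real.exp_add]
    field_simp
  -- integrability of uncurried G
  have h_meas : Measurable h := by
    simp only [hh]
    fun_prop
  have hG_int : Integrable (Function.uncurry G) (μ.prod (volume.restrict (Ioi (0:ℝ)))) := by
    have hGm : AEStronglyMeasurable (Function.uncurry G)
        (μ.prod (volume.restrict (Ioi (0:ℝ)))) := by
      apply Measurable.aestronglyMeasurable
      exact (h_meas.comp measurable_snd).mul
        ((measurable_snd.mul (hI.comp measurable_fst)).neg.exp)
    have hbound : Integrable (fun z : Ω × ℝ => (1:ℝ) * h z.2)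
        (μ.prod (volume.restrict (Ioi (0:ℝ)))) :=
      Integrable.mul_prod (integrable_const 1) (h_integrable hB hA)
    refine hbound.mono' hGm ?_
    have : μ.prod (volume.restrict (Ioi (0:ℝ)))
        = ((μ.restrict Set.univ).prod (volume.restrict (Ioi (0:ℝ)))) := by
      rw [Measure.restrict_univ]
    rw [this, Measure.prod_restrict]
    filter_upwards [ae_restrict_mem (MeasurableSet.univ.prod measurableSet_Ioi)] with z hz
    have hs : (0:ℝ) < z.2 := hz.2
    have hh0 : 0 ≤ h z.2 := by
      apply div_nonneg _ hs.le
      have : -(z.2*(B+A)) ≤ -(z.2*B) := by nlinarith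
      linarith [Real.exp_le_exp.2 this]
    have he1 : Real.exp (-(z.2 * I z.1)) ≤ 1 := by
      rw [← Real.exp_zero]
      apply Real.exp_le_exp.2
      have := hInn z.1
      nlinarith
    rw [one_mul, Real.norm_eq_abs, Function.uncurry, hG]
    rw [abs_of_nonneg (by positivity)]
    calc h z.2 * Real.exp (-(z.2 * I z.1)) ≤ h z.2 * 1 :=
        mul_le_mul_of_nonneg_left he1 hh0
      _ = h z.2 := mul_one _
  -- swap
  have swap := integral_integral_swap (f := G) hG_int
  calc ∫ ω, Real.log (1 + A / (B + I ω)) ∂μ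
      = ∫ ω, (∫ s in Ioi (0:ℝ), G ω s) ∂μ := by
        exact integral_congr_ae (Filter.Eventually.of_forall step1)
    _ = ∫ s in Ioi (0:ℝ), ∫ ω, G ω s ∂μ := swap
    _ = ∫ s in Set.Ioi (0 : ℝ),
          (Real.exp (-(s * B)) / s) * (∫ ω, Real.exp (-(s * I ω)) ∂μ) *
            (1 - Real.exp (-(s * A))) := by
        refine setIntegral_congr_fun measurableSet_Ioi (fun s hs => ?_)
        have hs' : (0:ℝ) < s := hs
        simp only [hG]
        rw [integral_const_mul]
        simp only [hh]
        rw [show -(s*(B+A)) = -(s*B) + -(s*A) by ring, Real.exp_add]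
        field_simp
end
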